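/- Let B be a k-blocking set of PG(n, Q), Q = p^h, with |B| ≤ 2Q^k. If every (n-k)-dimensional subspace intersects B in 1 mod p points, then B is minimal (no proper subset of B is a k-blocking set). -/

import Mathlib

open Module Submodule Finset

section Aux

variable {K V : Type*} [Field K] [AddCommGroup V] [Module K V] [FiniteDimensional K V]

/-- There is a linear automorphism carrying any subspace to any other of the same dimension. -/
lemma aux_exists_auto (U₁ U₂ : Submodule K V) (h : finrank K U₁ = finrank K U₂) :
    ∃ e : V ≃ₗ[K] V, U₁.map (e : V →ₗ[K] V) = U₂ := by
  obtain ⟨C₁, hC₁⟩ := Submodule.exists_isCompl U₁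
  obtain ⟨C₂, hC₂⟩ := Submodule.exists_isCompl U₂
  have hC : finrank K C₁ = finrank K C₂ := by
    have h₁ := Submodule.finrank_add_eq_of_isCompl hC₁
    have h₂ := Submodule.finrank_add_eq_of_isCompl hC₂
    omega
  obtain ⟨f⟩ := FiniteDimensional.nonempty_linearEquiv_of_finrank_eq h
  obtain ⟨g⟩ := FiniteDimensional.nonempty_linearEquiv_of_finrank_eq hC
  set e : V ≃ₗ[K] V :=
    ((Submodule.prodEquivOfIsCompl U₁ C₁ hC₁).symm.trans (f.prodCongr g)).trans
      (Submodule.prodEquivOfIsCompl U₂ C₂ hC₂) with he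
  refine ⟨e, ?_⟩
  have hle : U₁.map (e : V →ₗ[K] V) ≤ U₂ := by
    rintro _ ⟨x, hx, rfl⟩
    have hx' : x ∈ U₁ := hx
    have h1 : (Submodule.prodEquivOfIsCompl U₁ C₁ hC₁).symm x = ((⟨x, hx'⟩ : ↥U₁), (0 : ↥C₁)) :=
      Submodule.prodEquivOfIsCompl_symm_apply_left U₁ C₁ hC₁ (⟨x, hx'⟩ : ↥U₁)
    have h2 : e x = ↑(f ⟨x, hx'⟩) := by
      simp only [he, LinearEquiv.coe_coe, LinearEquiv.trans_apply, h1, LinearEquiv.prodCongr_apply,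
        map_zero, Submodule.coe_prodEquivOfIsCompl', Submodule.coe_zero, add_zero]
    simp only [LinearEquiv.coe_coe, h2]
    exact (f ⟨x, hx'⟩).2
  refine Submodule.eq_of_le_of_finrank_le hle ?_
  rw [LinearEquiv.finrank_map_eq]
  omega

/-- The number of j-dimensional subspaces through a nonzero vector does not depend on
the vector. -/
lemma aux_card_through (j : ℕ) {y₁ y₂ : V} (h₁ : y₁ ≠ 0) (h₂ : y₂ ≠ 0) :
    Nat.card {W : Submodule K V // finrank K W = j ∧ y₁ ∈ W}
      = Nat.card {W : Submodule K V // finrank K W = j ∧ y₂ ∈ W} := by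
  obtain ⟨e, he⟩ := aux_exists_auto (K ∙ y₁) (K ∙ y₂)
    (by rw [finrank_span_singleton h₁, finrank_span_singleton h₂])
  apply Nat.card_congr
  refine Equiv.subtypeEquiv (Submodule.orderIsoMapComap e).toEquiv ?_
  intro W
  have h3 : finrank K (W.map (e : V →ₗ[K] V)) = finrank K W := LinearEquiv.finrank_map_eq e W
  have h4 : y₁ ∈ W ↔ y₂ ∈ W.map (e : V →ₗ[K] V) := by
    rw [← Submodule.span_singleton_le_iff_mem, ← Submodule.span_singleton_le_iff_mem, ← he]
    exact (Submodule.map_le_map_iff_of_injective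
      (f := (e : V →ₗ[K] V)) (by exact e.injective) _ _).symm
  have hmap : (Submodule.orderIsoMapComap e).toEquiv W
      = W.map (e : V →ₗ[K] V) := rfl
  rw [hmap, h3]
  exact and_congr Iff.rfl h4

lemma aux_nat_card_subtype {α : Type*} [Fintype α] (P : α → Prop) [DecidablePred P] :
    Nat.card {x // P x} = (Finset.univ.filter P).card := by
  rw [Nat.card_eq_fintype_card, Fintype.card_subtype]

/-- Counting: the number of j-subspaces through a fixed nonzero vector is at most
`card K ^ (N - j)`-th fraction of the number of all j-subspaces. -/
lemma aux_count [Fintype K] [Finite V] {j : ℕ} (hj : 1 ≤ j) {y : V} (hy : y ≠ 0) :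
    Fintype.card K ^ (finrank K V - j) *
        Nat.card {W : Submodule K V // finrank K W = j ∧ y ∈ W}
      ≤ Nat.card {W : Submodule K V // finrank K W = j} := by
  classical
  haveI : Fintype V := Fintype.ofFinite V
  haveI : Finite (Submodule K V) :=
    Finite.of_injective (fun W : Submodule K V => (W : Set V)) SetLike.coe_injective
  haveI : Fintype (Submodule K V) := Fintype.ofFinite _
  set q := Fintype.card K with hq
  set N := finrank K V with hN
  by_cases hjN : j ≤ N
  swap
  · have hemp : IsEmpty {W : Submodule K V // finrank K W = j ∧ y ∈ W} :=
      ⟨fun ⟨W, hW, _⟩ => hjN (hW ▸ W.finrank_le)⟩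
    rw [Nat.card_of_isEmpty]
    simp
  set A : Finset (Submodule K V) := Finset.univ.filter (fun W => finrank K W = j) with hA
  -- for each W in A, the number of nonzero vectors in W is q^j - 1
  have hterm : ∀ W ∈ A, ((Finset.univ.erase (0 : V)).filter (· ∈ W)).card = q ^ j - 1 := by
    intro W hW
    have hWj : finrank K W = j := by simpa [hA] using hW
    have hcardW : (Finset.univ.filter (· ∈ W)).card = q ^ j := by
      rw [← aux_nat_card_subtype (· ∈ W)]
      rw [Nat.card_eq_fintype_card]
      rw [card_eq_pow_finrank (K := K) (V := W), hWj]
    rw [Finset.filter_erase, Finset.card_erase_of_mem (by simp [W.zero_mem]), hcardW]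
  -- constancy
  have hconst : ∀ x ∈ Finset.univ.erase (0 : V),
      (A.filter (fun W => x ∈ W)).card = (A.filter (fun W => y ∈ W)).card := by
    intro x hx
    have hx0 : x ≠ 0 := by simpa using (Finset.mem_erase.mp hx).1
    have h1 : (A.filter (fun W => x ∈ W)).card
        = Nat.card {W : Submodule K V // finrank K W = j ∧ x ∈ W} := by
      rw [aux_nat_card_subtype, hA, Finset.filter_filter]
    have h2 : (A.filter (fun W => y ∈ W)).card
        = Nat.card {W : Submodule K V // finrank K W = j ∧ y ∈ W} := by
      rw [aux_nat_card_subtype, hA, Finset.filter_filter]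
    rw [h1, h2, aux_card_through j hx0 hy]
  set c := (A.filter (fun W => y ∈ W)).card with hc
  -- double counting
  have hdc : ∑ W ∈ A, ((Finset.univ.erase (0 : V)).filter (· ∈ W)).card
      = ∑ x ∈ Finset.univ.erase (0 : V), (A.filter (fun W => x ∈ W)).card := by
    simp_rw [Finset.card_filter]
    exact Finset.sum_comm
  have hL : ∑ W ∈ A, ((Finset.univ.erase (0 : V)).filter (· ∈ W)).card
      = A.card * (q ^ j - 1) := by
    rw [Finset.sum_congr rfl hterm, Finset.sum_const, smul_eq_mul]
  have hR : ∑ x ∈ Finset.univ.erase (0 : V), (A.filter (fun W => x ∈ W)).card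
      = (q ^ N - 1) * c := by
    rw [Finset.sum_congr rfl hconst, Finset.sum_const, smul_eq_mul]
    congr 1
    rw [Finset.card_erase_of_mem (Finset.mem_univ _), Finset.card_univ]
    rw [card_eq_pow_finrank (K := K) (V := V)]
  have key : A.card * (q ^ j - 1) = (q ^ N - 1) * c := by rw [← hL, hdc, hR]
  -- now conclude
  have hgoal1 : Nat.card {W : Submodule K V // finrank K W = j} = A.card := by
    rw [aux_nat_card_subtype, hA]
  have hgoal2 : Nat.card {W : Submodule K V // finrank K W = j ∧ y ∈ W} = c := by
    rw [hc, aux_nat_card_subtype, hA, Finset.filter_filter]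
  rw [hgoal1, hgoal2]
  have hq2 : 2 ≤ q := Fintype.one_lt_card
  set a := q ^ (N - j) with ha
  set b := q ^ j with hb
  have hab : a * b = q ^ N := by rw [ha, hb, ← pow_add]; congr 1; omega
  have hb2 : 2 ≤ b := by
    calc 2 ≤ q := hq2
    _ = q ^ 1 := (pow_one q).symm
    _ ≤ q ^ j := Nat.pow_le_pow_right (by omega) hj
  have ha1 : 1 ≤ a := Nat.one_le_pow _ _ (by omega)
  -- b1 = b - 1, d = q^N - 1
  obtain ⟨b1, hb1⟩ : ∃ b1, b = b1 + 1 := ⟨b - 1, by omega⟩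
  obtain ⟨d, hd⟩ : ∃ d, q ^ N = d + 1 := ⟨q ^ N - 1, by
    have : 1 ≤ q ^ N := Nat.one_le_pow _ _ (by omega)
    omega⟩
  have key' : A.card * b1 = d * c := by
    have h1 : b - 1 = b1 := by omega
    have h2 : q ^ N - 1 = d := by omega
    rw [h1, h2] at key; exact key
  have hab' : a * b1 + a = d + 1 := by
    rw [← hd, ← hab, hb1, Nat.mul_add, Nat.mul_one]
  have hd2 : a * b1 ≤ d := by linarith
  have hstep : (a * c) * b1 ≤ A.card * b1 := by
    calc (a * c) * b1 = (a * b1) * c := by ring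
    _ ≤ d * c := Nat.mul_le_mul_right c hd2
    _ = A.card * b1 := key'.symm
  have hb1pos : 0 < b1 := by omega
  exact Nat.le_of_mul_le_mul_right hstep hb1pos

/-- Dimension of the preimage under the quotient map. -/
lemma aux_finrank_comap (P₀ : Submodule K V) (W' : Submodule K (V ⧸ P₀)) :
    finrank K (W'.comap P₀.mkQ) = finrank K W' + finrank K P₀ := by
  have hP : P₀ ≤ W'.comap P₀.mkQ := by
    intro z hz
    have hz0 : P₀.mkQ z = 0 := by
      rw [Submodule.mkQ_apply, Submodule.Quotient.mk_eq_zero]; exact hz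
    exact Submodule.mem_comap.mpr (hz0 ▸ W'.zero_mem)
  have h1 := LinearMap.finrank_range_add_finrank_ker (P₀.mkQ.domRestrict (W'.comap P₀.mkQ))
  rw [LinearMap.range_domRestrict, LinearMap.ker_domRestrict] at h1
  have h2 : (W'.comap P₀.mkQ).map P₀.mkQ = W' := by
    rw [Submodule.map_comap_eq, Submodule.range_mkQ, top_inf_eq]
  have h3 : finrank K ((LinearMap.ker P₀.mkQ).comap (W'.comap P₀.mkQ).subtype)
      = finrank K P₀ := by
    rw [Submodule.ker_mkQ]
    exact LinearEquiv.finrank_eq (Submodule.comapSubtypeEquivOfLe hP)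
  rw [h2, h3] at h1
  omega

/-- Existence of a subspace of any admissible dimension. -/
lemma aux_exists_finrank (d : ℕ) (hd : d ≤ finrank K V) :
    ∃ W : Submodule K V, finrank K W = d := by
  let b := Module.finBasis K V
  refine ⟨Submodule.span K (Set.range (⇑b ∘ Fin.castLE hd)), ?_⟩
  rw [finrank_span_eq_card (b.linearIndependent.comp _ (Fin.castLE_injective hd))]
  simp

end Aux

/-- A k-blocking set B of PG(n, Q), Q = p^h, with |B| ≤ 2Q^k meeting every (n-k)-space
in 1 mod p points is minimal: no proper subset is a k-blocking set. -/
theorem stmt_14 (p h Q : ℕ) (hp : p.Prime) (hQ : Q = p ^ h)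
    (K : Type*) [Field K] [Fintype K] (hK : Fintype.card K = Q)
    (n k : ℕ) (hk : 1 ≤ k) (hkn : k ≤ n)
    (B : Set (Submodule K (Fin (n + 1) → K)))
    (hB : ∀ P ∈ B, Module.finrank K P = 1)
    (hblock : ∀ W : Submodule K (Fin (n + 1) → K), Module.finrank K W = n - k + 1 →
      ∃ P ∈ B, P ≤ W)
    (hsize : Nat.card ↥B ≤ 2 * Q ^ k)
    (hmod : ∀ W : Submodule K (Fin (n + 1) → K), Module.finrank K W = n - k + 1 →
      Nat.card {P : Submodule K (Fin (n + 1) → K) // P ∈ B ∧ P ≤ W} ≡ 1 [MOD p]) :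
    ∀ B' ⊂ B, ∃ W : Submodule K (Fin (n + 1) → K),
      Module.finrank K W = n - k + 1 ∧ ∀ P ∈ B', ¬ P ≤ W := by
  classical
  intro B' hBsub
  obtain ⟨P₀, hP₀B, hP₀B'⟩ := Set.exists_of_ssubset hBsub
  by_cases hnk : n = k
  · -- degenerate case: the required subspaces are points, take P₀ itself
    refine ⟨P₀, ?_, ?_⟩
    · rw [hB P₀ hP₀B]; omega
    · intro P hPB' hle
      have hP : P = P₀ := Submodule.eq_of_le_of_finrank_le hle
        (by rw [hB P₀ hP₀B, hB P (hBsub.subset hPB')])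
      exact hP₀B' (hP ▸ hPB')
  -- main case : k < n
  by_contra hcon
  push_neg at hcon
  haveI : Finite (Submodule K (Fin (n + 1) → K)) :=
    Finite.of_injective (fun W : Submodule K (Fin (n + 1) → K) => (W : Set (Fin (n + 1) → K)))
      SetLike.coe_injective
  haveI : Fintype (Submodule K (Fin (n + 1) → K)) := Fintype.ofFinite _
  haveI hFinV' : Finite ((Fin (n + 1) → K) ⧸ P₀) :=
    Finite.of_surjective P₀.mkQ P₀.mkQ_surjective
  haveI : Finite (Submodule K ((Fin (n + 1) → K) ⧸ P₀)) :=
    Finite.of_injective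
      (fun W : Submodule K ((Fin (n + 1) → K) ⧸ P₀) => (W : Set ((Fin (n + 1) → K) ⧸ P₀)))
      SetLike.coe_injective
  haveI : Fintype (Submodule K ((Fin (n + 1) → K) ⧸ P₀)) := Fintype.ofFinite _
  have hV : finrank K (Fin (n + 1) → K) = n + 1 := Module.finrank_fin_fun K
  have hP₀1 : finrank K P₀ = 1 := hB P₀ hP₀B
  have hV' : finrank K ((Fin (n + 1) → K) ⧸ P₀) = n := by
    have h := Submodule.finrank_quotient_add_finrank P₀
    rw [hV, hP₀1] at h; omega
  set j := n - k with hj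
  have hj1 : 1 ≤ j := by omega
  have hjn : j ≤ n := by omega
  have hBfinite : B.Finite := Set.toFinite B
  set Bfin := hBfinite.toFinset with hBfin
  have hcardB : Bfin.card = Nat.card ↥B := by
    rw [Nat.card_coe_set_eq, Set.ncard_eq_toFinset_card _ hBfinite]
  set Bc := Bfin.erase P₀ with hBc
  set sQ : Finset (Submodule K ((Fin (n + 1) → K) ⧸ P₀)) :=
    Finset.univ.filter (fun W' => finrank K W' = j) with hsQ
  -- dimension and containment facts about preimages
  have hWrank : ∀ W' ∈ sQ, finrank K (W'.comap P₀.mkQ) = n - k + 1 := by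
    intro W' hW'
    rw [aux_finrank_comap, hP₀1]
    have : finrank K W' = j := by simpa [hsQ] using hW'
    omega
  have hWle : ∀ W' : Submodule K ((Fin (n + 1) → K) ⧸ P₀), P₀ ≤ W'.comap P₀.mkQ := by
    intro W' z hz
    have hz0 : P₀.mkQ z = 0 := by
      rw [Submodule.mkQ_apply, Submodule.Quotient.mk_eq_zero]; exact hz
    exact Submodule.mem_comap.mpr (hz0 ▸ W'.zero_mem)
  -- (2) each relevant subspace contains at least p further blocking points
  have hlower : ∀ W' ∈ sQ, p ≤ (Bc.filter (fun P => P ≤ W'.comap P₀.mkQ)).card := by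
    intro W' hW'
    set W := W'.comap P₀.mkQ with hW
    have hWr : finrank K W = n - k + 1 := hWrank W' hW'
    have hmodW := hmod W hWr
    obtain ⟨P₁, hP₁B', hP₁W⟩ := hcon W hWr
    have hP₁B : P₁ ∈ B := hBsub.subset hP₁B'
    have hNe : P₁ ≠ P₀ := fun hEq => hP₀B' (hEq ▸ hP₁B')
    have h2 : 2 ≤ Nat.card {P : Submodule K (Fin (n + 1) → K) // P ∈ B ∧ P ≤ W} := by
      rw [show (2 : ℕ) = 1 + 1 by rfl, Nat.add_one_le_iff, Nat.card_eq_fintype_card,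
        Fintype.one_lt_card_iff_nontrivial]
      exact ⟨⟨⟨P₀, hP₀B, hWle W'⟩, ⟨P₁, hP₁B, hP₁W⟩,
        fun hEq => hNe (Subtype.mk_eq_mk.mp hEq).symm⟩⟩
    set c := Nat.card {P : Submodule K (Fin (n + 1) → K) // P ∈ B ∧ P ≤ W} with hcdef
    have hcp : c % p = 1 := by
      have h1p : 1 % p = 1 := Nat.mod_eq_of_lt hp.one_lt
      have := hmodW
      unfold Nat.ModEq at this
      omega
    have hple : p + 1 ≤ c := by
      obtain ⟨d, hd⟩ : ∃ d, c = p * d + 1 := by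
        refine ⟨c / p, ?_⟩
        conv_lhs => rw [← Nat.div_add_mod c p]
        rw [hcp]
      rcases Nat.eq_zero_or_pos d with hd0 | hd0
      · rw [hd0, Nat.mul_zero] at hd; omega
      · have hpd : p * 1 ≤ p * d := Nat.mul_le_mul_left p hd0
        rw [Nat.mul_one] at hpd
        linarith
    have hconv : c = (Bfin.filter (fun P => P ≤ W)).card := by
      rw [hcdef, aux_nat_card_subtype]
      congr 1
      ext P
      simp [hBfin, Set.Finite.mem_toFinset, Set.mem_setOf_eq]
    have hfe : (Bc.filter (fun P => P ≤ W)).card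
        = (Bfin.filter (fun P => P ≤ W)).card - 1 := by
      rw [hBc, Finset.filter_erase, Finset.card_erase_of_mem]
      rw [Finset.mem_filter]
      exact ⟨hBfinite.mem_toFinset.mpr hP₀B, hWle W'⟩
    omega
  -- (3) each further point is in at most sQ.card / Q^k subspaces
  have hupper : ∀ P ∈ Bc,
      Q ^ k * (sQ.filter (fun W' => P ≤ W'.comap P₀.mkQ)).card ≤ sQ.card := by
    intro P hP
    have hPBfin : P ∈ Bfin := Finset.mem_of_mem_erase hP
    have hPB : P ∈ B := by simpa [hBfin, Set.Finite.mem_toFinset] using hPBfin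
    have hPne : P ≠ P₀ := Finset.ne_of_mem_erase hP
    have hP1 : finrank K P = 1 := hB P hPB
    have hnotle : ¬ P ≤ P₀ := fun hle =>
      hPne (Submodule.eq_of_le_of_finrank_le hle (by rw [hP₀1, hP1]))
    obtain ⟨x, hxP, hxP₀⟩ := SetLike.not_le_iff_exists.mp hnotle
    have hx0 : x ≠ 0 := fun hEq => hxP₀ (hEq ▸ P₀.zero_mem)
    have hy : P₀.mkQ x ≠ 0 := fun hcontra => hxP₀ (by
      rwa [Submodule.mkQ_apply, Submodule.Quotient.mk_eq_zero] at hcontra)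
    have hxspan : P = K ∙ x := by
      refine (Submodule.eq_of_le_of_finrank_le
        ((Submodule.span_singleton_le_iff_mem x P).mpr hxP) ?_).symm
      rw [hP1, finrank_span_singleton hx0]
    have hiff : ∀ W' ∈ sQ, P ≤ W'.comap P₀.mkQ ↔ P₀.mkQ x ∈ W' := by
      intro W' _
      constructor
      · intro hle
        exact Submodule.mem_comap.mp (hle hxP)
      · intro hmem
        rw [hxspan, Submodule.span_singleton_le_iff_mem]
        exact Submodule.mem_comap.mpr hmem
    have hfilt : (sQ.filter (fun W' => P ≤ W'.comap P₀.mkQ))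
        = sQ.filter (fun W' => P₀.mkQ x ∈ W') := Finset.filter_congr hiff
    have hcount := aux_count (K := K) (V := (Fin (n + 1) → K) ⧸ P₀) hj1 hy
    rw [hV', hK] at hcount
    have hnj : n - j = k := by omega
    rw [hnj] at hcount
    have hc1 : Nat.card {W' : Submodule K ((Fin (n + 1) → K) ⧸ P₀) // finrank K W' = j}
        = sQ.card := by rw [aux_nat_card_subtype, hsQ]
    have hc2 : Nat.card {W' : Submodule K ((Fin (n + 1) → K) ⧸ P₀) //
          finrank K W' = j ∧ P₀.mkQ x ∈ W'}
        = (sQ.filter (fun W' => P₀.mkQ x ∈ W')).card := by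
      rw [aux_nat_card_subtype, hsQ, Finset.filter_filter]
    rw [hc1, hc2] at hcount
    rw [hfilt]
    exact hcount
  -- (4) double counting
  have hdc : ∑ W' ∈ sQ, (Bc.filter (fun P => P ≤ W'.comap P₀.mkQ)).card
      = ∑ P ∈ Bc, (sQ.filter (fun W' => P ≤ W'.comap P₀.mkQ)).card := by
    simp_rw [Finset.card_filter]
    exact Finset.sum_comm
  -- (5) sQ is nonempty
  have hsQpos : 0 < sQ.card := by
    obtain ⟨W₀', hW₀'⟩ := aux_exists_finrank (K := K) (V := (Fin (n + 1) → K) ⧸ P₀) j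
      (by rw [hV']; exact hjn)
    exact Finset.card_pos.mpr ⟨W₀', by simp [hsQ, hW₀']⟩
  -- (6) final chain
  set X := Q ^ k with hX
  set s := sQ.card with hs
  have hX1 : 1 ≤ X := by
    rw [hX, ← hK]
    exact Nat.one_le_pow _ _ Fintype.card_pos
  have hchain1 : s * p ≤ ∑ W' ∈ sQ, (Bc.filter (fun P => P ≤ W'.comap P₀.mkQ)).card := by
    calc s * p = ∑ _W' ∈ sQ, p := by rw [Finset.sum_const, smul_eq_mul]
    _ ≤ _ := Finset.sum_le_sum hlower
  have hchain2 : X * ∑ P ∈ Bc, (sQ.filter (fun W' => P ≤ W'.comap P₀.mkQ)).card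
      ≤ Bc.card * s := by
    rw [Finset.mul_sum]
    calc ∑ P ∈ Bc, X * (sQ.filter (fun W' => P ≤ W'.comap P₀.mkQ)).card
        ≤ ∑ _P ∈ Bc, s := Finset.sum_le_sum hupper
    _ = Bc.card * s := by rw [Finset.sum_const, smul_eq_mul]
  have hcomb : X * (s * p) ≤ Bc.card * s := by
    calc X * (s * p) ≤ X * ∑ W' ∈ sQ, (Bc.filter (fun P => P ≤ W'.comap P₀.mkQ)).card :=
          Nat.mul_le_mul_left X hchain1
    _ = X * ∑ P ∈ Bc, (sQ.filter (fun W' => P ≤ W'.comap P₀.mkQ)).card := by rw [hdc]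
    _ ≤ Bc.card * s := hchain2
  have hXp : X * p ≤ Bc.card := by
    have h' : (X * p) * s ≤ Bc.card * s := by
      calc (X * p) * s = X * (s * p) := by ring
      _ ≤ Bc.card * s := hcomb
    exact Nat.le_of_mul_le_mul_right h' hsQpos
  have hBcard : Bc.card + 1 = Bfin.card := by
    have h1 : Bc.card = Bfin.card - 1 :=
      Finset.card_erase_of_mem (hBfinite.mem_toFinset.mpr hP₀B)
    have h2 : 0 < Bfin.card := Finset.card_pos.mpr ⟨P₀, hBfinite.mem_toFinset.mpr hP₀B⟩
    omega
  have hBsize : Bfin.card ≤ 2 * X := by rw [hcardB, hX]; exact hsize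
  have h2X : 2 * X ≤ X * p := by
    calc 2 * X = X * 2 := by ring
    _ ≤ X * p := Nat.mul_le_mul_left X hp.two_le
  linarith
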